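/- Let t ≥ 1 and let R be a d×t random matrix whose entries are i.i.d., each equal to +1/√t or −1/√t with probability 1/2. Then for any real matrices S ∈ ℝ^{n×d} and T ∈ ℝ^{d×k}, E[‖ST − SRRᵀT‖_F²] ≤ (2/t)·‖S‖_F²·‖T‖_F². -/

import Mathlib

open MeasureTheory
open scoped Matrix

/-- Frobenius norm of a real matrix. -/
noncomputable def frobNorm {m n : ℕ} (M : Matrix (Fin m) (Fin n) ℝ) : ℝ :=
  Real.sqrt (∑ i, ∑ j, (M i j) ^ 2)

/-- Spectral (operator) norm of a real matrix, viewed as a linear map between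
Euclidean spaces. -/
noncomputable def specNorm {m n : ℕ} (M : Matrix (Fin m) (Fin n) ℝ) : ℝ :=
  ‖LinearMap.toContinuousLinearMap (Matrix.toEuclideanLin M)‖

/-- `P` is the Moore–Penrose pseudoinverse of `M` (the four Penrose conditions;
such a `P` is unique). -/
def IsMoorePenrose {m n : ℕ} (M : Matrix (Fin m) (Fin n) ℝ)
    (P : Matrix (Fin n) (Fin m) ℝ) : Prop :=
  M * P * M = M ∧ P * M * P = P ∧ (M * P)ᵀ = M * P ∧ (P * M)ᵀ = P * M

/-- `X` is an `n × k` cluster indicator matrix: each row `i` has a single nonzero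
entry, in column `f i`, equal to `1/√(z_{f i})` where `z_j` is the number of rows
assigned to column `j`. -/
def IsIndicator {n k : ℕ} (X : Matrix (Fin n) (Fin k) ℝ) : Prop :=
  ∃ f : Fin n → Fin k, ∀ i j, X i j =
    if f i = j then 1 / Real.sqrt ((Finset.univ.filter fun i' => f i' = j).card) else 0

/-- The singular values of a `k × t` real matrix `M` (in some order): the square
roots of the eigenvalues of `M * Mᵀ`. -/
noncomputable def singVals {k t : ℕ} (M : Matrix (Fin k) (Fin t) ℝ) (i : Fin k) : ℝ :=
  Real.sqrt ((Matrix.isHermitian_mul_conjTranspose_self M).eigenvalues i)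

/-- The `d × t` random sign matrix with entries `±1/√t`, as a function of the
sample point `ω` (a `d × t` array of fair coins). -/
noncomputable def signMatrix (d t : ℕ) (ω : Fin d → Fin t → Bool) :
    Matrix (Fin d) (Fin t) ℝ :=
  Matrix.of fun i j => (if ω i j then (1 : ℝ) else -1) / Real.sqrt t

/-- The law of a `d × t` matrix of i.i.d. fair signs: the uniform probability
measure on all `d × t` sign patterns. -/
noncomputable def signMeasure (d t : ℕ) : Measure (Fin d → Fin t → Bool) :=
  (PMF.uniformOfFintype (Fin d → Fin t → Bool)).toMeasure

section Helpers
open Finset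
namespace St7

variable {d t : ℕ}

/-- sign of a coin -/
def sgn (ω : Fin d → Fin t → Bool) (i : Fin d) (j : Fin t) : ℝ :=
  if ω i j then 1 else -1

lemma sgn_mul_self (ω : Fin d → Fin t → Bool) (i j) : sgn ω i j * sgn ω i j = 1 := by
  unfold sgn; split <;> norm_num

def flip (p : Fin d) (q : Fin t) (ω : Fin d → Fin t → Bool) : Fin d → Fin t → Bool :=
  fun i j => if i = p ∧ j = q then !(ω i j) else ω i j

lemma flip_flip (p q) (ω : Fin d → Fin t → Bool) : flip p q (flip p q ω) = ω := by
  funext i j; unfold flip; by_cases h : i = p ∧ j = q <;> simp [h]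

lemma sgn_flip (p q) (ω : Fin d → Fin t → Bool) (i j) :
    sgn (flip p q ω) i j = if i = p ∧ j = q then -(sgn ω i j) else sgn ω i j := by
  unfold sgn flip; by_cases h : i = p ∧ j = q <;> simp [h]
  obtain ⟨rfl, rfl⟩ := h
  by_cases h2 : ω i j <;> simp [h2]

lemma sum_zero_of_flip_neg (p : Fin d) (q : Fin t) (F : (Fin d → Fin t → Bool) → ℝ)
    (h : ∀ ω, F (flip p q ω) = -F ω) : ∑ ω, F ω = 0 := by
  have hb : Function.Bijective (flip p q) :=
    Function.bijective_iff_has_inverse.2 ⟨flip p q, flip_flip p q, flip_flip p q⟩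
  have h1 : ∑ ω, F ω = ∑ ω, F (flip p q ω) := (Fintype.sum_bijective _ hb _ _ (fun x => rfl)).symm
  have h2 : ∑ ω, F (flip p q ω) = -∑ ω, F ω := by
    simp_rw [h]; rw [Finset.sum_neg_distrib]
  linarith

end St7

namespace St7
variable {d t : ℕ}

lemma moment (a b a' b' : Fin d) (j j' : Fin t) (hab : a ≠ b) (hab' : a' ≠ b') :
    ∑ ω : Fin d → Fin t → Bool,
      (sgn ω a j * sgn ω b j) * (sgn ω a' j' * sgn ω b' j')
      = if j = j' ∧ ((a = a' ∧ b = b') ∨ (a = b' ∧ b = a')) then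
          (Fintype.card (Fin d → Fin t → Bool) : ℝ) else 0 := by
  by_cases hj : j = j'
  · subst hj
    by_cases h1 : a = a' ∧ b = b'
    · obtain ⟨rfl, rfl⟩ := h1
      have : ∀ ω : Fin d → Fin t → Bool,
          (sgn ω a j * sgn ω b j) * (sgn ω a j * sgn ω b j) = 1 := by
        intro ω
        have := sgn_mul_self ω a j
        have := sgn_mul_self ω b j
        nlinarith
      simp [this, Finset.sum_const, Finset.card_univ]
    · by_cases h2 : a = b' ∧ b = a'
      · obtain ⟨rfl, rfl⟩ := h2
        have : ∀ ω : Fin d → Fin t → Bool,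
            (sgn ω a j * sgn ω b j) * (sgn ω b j * sgn ω a j) = 1 := by
          intro ω
          have := sgn_mul_self ω a j
          have := sgn_mul_self ω b j
          nlinarith
        simp [this, Finset.sum_const, Finset.card_univ, hab]
      · -- some index appears an odd number of times
        have key : (a ≠ a' ∧ a ≠ b') ∨ (b ≠ a' ∧ b ≠ b') := by
          rcases eq_or_ne a a' with h | h
          · rcases eq_or_ne b b' with h3 | h3
            · exact absurd ⟨h, h3⟩ h1
            · right
              refine ⟨fun hb => hab ?_, h3⟩
              rw [h, hb]
          · rcases eq_or_ne a b' with h3 | h3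
            · right
              refine ⟨fun hb => h2 ⟨h3, hb⟩, fun hb => hab ?_⟩
              rw [h3, hb]
            · exact Or.inl ⟨h, h3⟩
        rw [if_neg (by tauto)]
        rcases key with ⟨h3, h4⟩ | ⟨h3, h4⟩
        · refine sum_zero_of_flip_neg a j _ (fun ω => ?_)
          simp [sgn_flip, Ne.symm hab, Ne.symm h3, Ne.symm h4]
        · refine sum_zero_of_flip_neg b j _ (fun ω => ?_)
          simp [sgn_flip, hab, Ne.symm h3, Ne.symm h4]
  · rw [if_neg (fun h => hj h.1)]
    refine sum_zero_of_flip_neg a j _ (fun ω => ?_)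
    simp [sgn_flip, Ne.symm hab, Ne.symm hj]

lemma sumA (p p' : Fin d × Fin d) (hp : p.1 ≠ p.2) (hp' : p'.1 ≠ p'.2) :
    ∑ ω : Fin d → Fin t → Bool,
      (∑ j, sgn ω p.1 j * sgn ω p.2 j) * (∑ j, sgn ω p'.1 j * sgn ω p'.2 j)
      = if p' = p ∨ p' = p.swap then
          (Fintype.card (Fin d → Fin t → Bool) : ℝ) * t else 0 := by
  have : ∀ ω : Fin d → Fin t → Bool,
      (∑ j, sgn ω p.1 j * sgn ω p.2 j) * (∑ j, sgn ω p'.1 j * sgn ω p'.2 j)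
      = ∑ j, ∑ j', (sgn ω p.1 j * sgn ω p.2 j) * (sgn ω p'.1 j' * sgn ω p'.2 j') := by
    intro ω; rw [Finset.sum_mul_sum]
  simp_rw [this]
  rw [Finset.sum_comm]
  rw [Finset.sum_congr rfl (fun j _ => Finset.sum_comm)]
  have hm : ∀ j j' : Fin t, ∑ ω : Fin d → Fin t → Bool,
      (sgn ω p.1 j * sgn ω p.2 j) * (sgn ω p'.1 j' * sgn ω p'.2 j')
      = if j = j' ∧ ((p.1 = p'.1 ∧ p.2 = p'.2) ∨ (p.1 = p'.2 ∧ p.2 = p'.1)) then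
          (Fintype.card (Fin d → Fin t → Bool) : ℝ) else 0 :=
    fun j j' => moment p.1 p.2 p'.1 p'.2 j j' hp hp'
  simp_rw [hm]
  have hPiff : ((p.1 = p'.1 ∧ p.2 = p'.2) ∨ (p.1 = p'.2 ∧ p.2 = p'.1)) ↔
      (p' = p ∨ p' = p.swap) := by
    cases p; cases p'; simp [Prod.ext_iff, eq_comm]; tauto
  by_cases hP : (p.1 = p'.1 ∧ p.2 = p'.2) ∨ (p.1 = p'.2 ∧ p.2 = p'.1)
  · rw [if_pos (hPiff.mp hP)]
    simp only [hP, and_true]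
    rw [Finset.sum_congr rfl (fun j _ => Finset.sum_ite_eq Finset.univ j
      (fun _ => (Fintype.card (Fin d → Fin t → Bool) : ℝ)))]
    simp [Finset.card_univ, mul_comm]
  · rw [if_neg (fun h => hP (hPiff.mpr h))]
    simp [hP]

end St7

namespace St7
variable {d t : ℕ}

lemma entry (ht : 1 ≤ t) (ω : Fin d → Fin t → Bool) (a b : Fin d) :
    ((1 : Matrix (Fin d) (Fin d) ℝ) - signMatrix d t ω * (signMatrix d t ω)ᵀ) a b
    = (if a = b then 1 else 0) - (1 / t) * ∑ j, sgn ω a j * sgn ω b j := by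
  have ht0 : (0:ℝ) < t := by exact_mod_cast Nat.lt_of_lt_of_le Nat.zero_lt_one ht
  have hst : Real.sqrt t * Real.sqrt t = (t:ℝ) := Real.mul_self_sqrt ht0.le
  simp only [Matrix.sub_apply, Matrix.one_apply, Matrix.mul_apply, Matrix.transpose_apply,
    signMatrix, Matrix.of_apply]
  congr 1
  rw [Finset.mul_sum]
  refine Finset.sum_congr rfl fun j _ => ?_
  rw [div_mul_div_comm, hst]
  unfold sgn
  field_simp

lemma entry_diag (ht : 1 ≤ t) (ω : Fin d → Fin t → Bool) (a : Fin d) :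
    ((1 : Matrix (Fin d) (Fin d) ℝ) - signMatrix d t ω * (signMatrix d t ω)ᵀ) a a = 0 := by
  have ht0 : (0:ℝ) < t := by exact_mod_cast Nat.lt_of_lt_of_le Nat.zero_lt_one ht
  rw [entry ht, if_pos rfl]
  simp [sgn_mul_self]
  field_simp
  norm_num

lemma sum_sq (ht : 1 ≤ t) (c : Fin d × Fin d → ℝ) :
    ∑ ω : Fin d → Fin t → Bool,
      (∑ p ∈ Finset.univ.offDiag, c p * (∑ j, sgn ω p.1 j * sgn ω p.2 j)) ^ 2
    = (Fintype.card (Fin d → Fin t → Bool) : ℝ) * t *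
        ∑ p ∈ Finset.univ.offDiag, (c p * c p + c p * c p.swap) := by
  set N : ℝ := (Fintype.card (Fin d → Fin t → Bool) : ℝ) with hN
  have hsq : ∀ ω : Fin d → Fin t → Bool,
      (∑ p ∈ Finset.univ.offDiag, c p * (∑ j, sgn ω p.1 j * sgn ω p.2 j)) ^ 2
      = ∑ p ∈ Finset.univ.offDiag, ∑ p' ∈ Finset.univ.offDiag,
          (c p * c p') * ((∑ j, sgn ω p.1 j * sgn ω p.2 j) *
            (∑ j, sgn ω p'.1 j * sgn ω p'.2 j)) := by
    intro ω
    rw [pow_two, Finset.sum_mul_sum]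
    exact Finset.sum_congr rfl fun p _ => Finset.sum_congr rfl fun p' _ => by ring
  simp_rw [hsq]
  rw [Finset.sum_comm]
  rw [Finset.sum_congr rfl (fun p _ => Finset.sum_comm)]
  have hinner : ∀ p ∈ Finset.univ.offDiag, ∀ p' ∈ Finset.univ.offDiag,
      ∑ ω : Fin d → Fin t → Bool, (c p * c p') * ((∑ j, sgn ω p.1 j * sgn ω p.2 j) *
        (∑ j, sgn ω p'.1 j * sgn ω p'.2 j))
      = (c p * c p') * (if p' = p ∨ p' = p.swap then N * t else 0) := by
    intro p hp p' hp'
    rw [← Finset.mul_sum, sumA p p' (Finset.mem_offDiag.mp hp).2.2 (Finset.mem_offDiag.mp hp').2.2]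
  rw [Finset.sum_congr rfl (fun p hp => Finset.sum_congr rfl (fun p' hp' => hinner p hp p' hp'))]
  rw [Finset.mul_sum]
  refine Finset.sum_congr rfl fun p hp => ?_
  have hpd : p.1 ≠ p.2 := (Finset.mem_offDiag.mp hp).2.2
  have hswap : p.swap ∈ Finset.univ.offDiag := by
    rw [Finset.mem_offDiag]; exact ⟨Finset.mem_univ _, Finset.mem_univ _, fun h => hpd h.symm⟩
  have hne : p ≠ p.swap := fun h => hpd (by rw [Prod.ext_iff] at h; exact h.1.trans rfl)
  have hsplit : ∀ p' : Fin d × Fin d,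
      (c p * c p') * (if p' = p ∨ p' = p.swap then N * t else 0)
      = (if p' = p then (c p * c p') * (N * t) else 0)
        + (if p' = p.swap then (c p * c p') * (N * t) else 0) := by
    intro p'
    by_cases e1 : p' = p <;> by_cases e2 : p' = p.swap
    · exact absurd (e1.symm.trans e2) hne
    all_goals simp [e1, e2, hne, Ne.symm hne]
  rw [Finset.sum_congr rfl fun p' _ => hsplit p']
  rw [Finset.sum_add_distrib, Finset.sum_ite_eq' _ p, Finset.sum_ite_eq' _ p.swap,
    if_pos hp, if_pos hswap]
  ring

lemma bound (f g : Fin d → ℝ) :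
    ∑ p ∈ Finset.univ.offDiag,
      ((f p.1 * g p.2) * (f p.1 * g p.2) + (f p.1 * g p.2) * (f p.2 * g p.1))
    ≤ 2 * (∑ a, f a ^ 2) * (∑ b, g b ^ 2) := by
  have hsub : (Finset.univ.offDiag : Finset (Fin d × Fin d)) ⊆ Finset.univ ×ˢ Finset.univ :=
    fun p _ => Finset.mem_product.mpr ⟨Finset.mem_univ _, Finset.mem_univ _⟩
  have h1 : ∑ p ∈ Finset.univ.offDiag, (f p.1 * g p.2) * (f p.1 * g p.2)
      ≤ (∑ a, f a ^ 2) * (∑ b, g b ^ 2) := by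
    calc ∑ p ∈ Finset.univ.offDiag, (f p.1 * g p.2) * (f p.1 * g p.2)
        ≤ ∑ p ∈ Finset.univ ×ˢ Finset.univ, (f p.1 * g p.2) * (f p.1 * g p.2) :=
          Finset.sum_le_sum_of_subset_of_nonneg hsub (fun p _ _ => mul_self_nonneg _)
      _ = (∑ a, f a ^ 2) * (∑ b, g b ^ 2) := by
          rw [Finset.sum_mul_sum, Finset.sum_product]
          exact Finset.sum_congr rfl fun a _ => Finset.sum_congr rfl fun b _ => by ring
  have h2 : ∑ p ∈ Finset.univ.offDiag, (f p.1 * g p.2) * (f p.2 * g p.1)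
      ≤ (∑ a, f a ^ 2) * (∑ b, g b ^ 2) := by
    calc ∑ p ∈ Finset.univ.offDiag, (f p.1 * g p.2) * (f p.2 * g p.1)
        ≤ ∑ p ∈ Finset.univ ×ˢ Finset.univ, (f p.1 * g p.1) * (f p.2 * g p.2) := by
          refine le_trans (le_of_eq (Finset.sum_congr rfl fun p _ => by ring))
            (Finset.sum_le_sum_of_subset_of_nonneg hsub ?_)
          intro p hp hnp
          have : p.1 = p.2 := by
            by_contra hne
            exact hnp (Finset.mem_offDiag.mpr ⟨Finset.mem_univ _, Finset.mem_univ _, hne⟩)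
          rw [← this]
          exact mul_self_nonneg _
      _ = (∑ a, f a * g a) ^ 2 := by
          rw [pow_two, Finset.sum_mul_sum, Finset.sum_product]
      _ ≤ (∑ a, (f a) ^ 2) * (∑ a, (g a) ^ 2) := Finset.sum_mul_sq_le_sq_mul_sq _ _ _
  calc ∑ p ∈ Finset.univ.offDiag,
        ((f p.1 * g p.2) * (f p.1 * g p.2) + (f p.1 * g p.2) * (f p.2 * g p.1))
      = (∑ p ∈ Finset.univ.offDiag, (f p.1 * g p.2) * (f p.1 * g p.2))
        + ∑ p ∈ Finset.univ.offDiag, (f p.1 * g p.2) * (f p.2 * g p.1) :=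
        Finset.sum_add_distrib
    _ ≤ 2 * (∑ a, f a ^ 2) * (∑ b, g b ^ 2) := by linarith

end St7

end Helpers


namespace St7
open Finset
variable {d t : ℕ}

lemma D_apply {n k : ℕ} (ht : 1 ≤ t) (S : Matrix (Fin n) (Fin d) ℝ)
    (T : Matrix (Fin d) (Fin k) ℝ) (ω : Fin d → Fin t → Bool) (i : Fin n) (l : Fin k) :
    (S * T - S * signMatrix d t ω * (signMatrix d t ω)ᵀ * T) i l
    = -(1 / t) * ∑ p ∈ Finset.univ.offDiag,
        (S i p.1 * T p.2 l) * (∑ j, sgn ω p.1 j * sgn ω p.2 j) := by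
  have hmat : S * T - S * signMatrix d t ω * (signMatrix d t ω)ᵀ * T
      = S * ((1 : Matrix (Fin d) (Fin d) ℝ) - signMatrix d t ω * (signMatrix d t ω)ᵀ) * T := by
    rw [Matrix.mul_sub, Matrix.mul_one, Matrix.sub_mul]
    congr 2
    exact Matrix.mul_assoc S _ _
  rw [hmat]
  simp_rw [Matrix.mul_apply, Finset.sum_mul]
  rw [Finset.sum_comm]
  rw [← Finset.sum_product']
  have hsub : (Finset.univ.offDiag : Finset (Fin d × Fin d)) ⊆ Finset.univ ×ˢ Finset.univ :=
    fun p _ => Finset.mem_product.mpr ⟨Finset.mem_univ _, Finset.mem_univ _⟩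
  have hvan : ∀ p ∈ Finset.univ ×ˢ Finset.univ, p ∉ (Finset.univ.offDiag : Finset (Fin d × Fin d)) →
      S i p.1 * ((1 : Matrix (Fin d) (Fin d) ℝ)
        - signMatrix d t ω * (signMatrix d t ω)ᵀ) p.1 p.2 * T p.2 l = 0 := by
    intro p _ hnp
    have hpe : p.1 = p.2 := by
      by_contra hne
      exact hnp (Finset.mem_offDiag.mpr ⟨Finset.mem_univ _, Finset.mem_univ _, hne⟩)
    rw [← hpe, entry_diag ht]
    ring
  rw [← Finset.sum_subset hsub hvan]
  rw [Finset.mul_sum]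
  refine Finset.sum_congr rfl fun p hp => ?_
  rw [entry ht, if_neg (Finset.mem_offDiag.mp hp).2.2]
  ring

end St7

/-- approximate matrix multiplication, second moment bound. -/
theorem statement7 (d t n k : ℕ) (ht : 1 ≤ t)
    (S : Matrix (Fin n) (Fin d) ℝ) (T : Matrix (Fin d) (Fin k) ℝ) :
    ∫ ω, frobNorm (S * T - S * signMatrix d t ω * (signMatrix d t ω)ᵀ * T) ^ 2
        ∂(signMeasure d t) ≤
      2 / (t : ℝ) * frobNorm S ^ 2 * frobNorm T ^ 2 := by
  classical
  set N : ℝ := (Fintype.card (Fin d → Fin t → Bool) : ℝ) with hNdef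
  have hN0 : (0 : ℝ) < N := by
    rw [hNdef]; exact_mod_cast Fintype.card_pos
  have ht0 : (0 : ℝ) < t := by exact_mod_cast Nat.lt_of_lt_of_le Nat.zero_lt_one ht
  have hfr : ∀ (m' k' : ℕ) (M : Matrix (Fin m') (Fin k') ℝ),
      frobNorm M ^ 2 = ∑ i, ∑ j, (M i j) ^ 2 := by
    intro m' k' M
    rw [frobNorm, Real.sq_sqrt (by positivity)]
  have hint : ∫ ω, frobNorm (S * T - S * signMatrix d t ω * (signMatrix d t ω)ᵀ * T) ^ 2
        ∂(signMeasure d t)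
      = N⁻¹ * ∑ ω, frobNorm (S * T - S * signMatrix d t ω * (signMatrix d t ω)ᵀ * T) ^ 2 := by
    rw [signMeasure, PMF.integral_eq_sum, Finset.mul_sum]
    refine Finset.sum_congr rfl fun ω _ => ?_
    rw [PMF.uniformOfFintype_apply, smul_eq_mul]
    congr 1
    rw [ENNReal.toReal_inv, hNdef]
    simp
  -- per (i,l) sum over ω
  have hDsq : ∀ (i : Fin n) (l : Fin k),
      ∑ ω : Fin d → Fin t → Bool,
          (S * T - S * signMatrix d t ω * (signMatrix d t ω)ᵀ * T) i l ^ 2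
      = (1 / (t : ℝ)) ^ 2 * (N * t * ∑ p ∈ Finset.univ.offDiag,
          ((S i p.1 * T p.2 l) * (S i p.1 * T p.2 l)
            + (S i p.1 * T p.2 l) * (S i p.swap.1 * T p.swap.2 l))) := by
    intro i l
    have hterm : ∀ ω : Fin d → Fin t → Bool,
        (S * T - S * signMatrix d t ω * (signMatrix d t ω)ᵀ * T) i l ^ 2
        = (1 / (t : ℝ)) ^ 2 * (∑ p ∈ Finset.univ.offDiag,
            (S i p.1 * T p.2 l) * (∑ j, St7.sgn ω p.1 j * St7.sgn ω p.2 j)) ^ 2 := by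
      intro ω
      rw [St7.D_apply ht]
      ring
    rw [Finset.sum_congr rfl fun ω _ => hterm ω, ← Finset.mul_sum,
      St7.sum_sq ht (fun p => S i p.1 * T p.2 l)]
  calc ∫ ω, frobNorm (S * T - S * signMatrix d t ω * (signMatrix d t ω)ᵀ * T) ^ 2
        ∂(signMeasure d t)
      = N⁻¹ * ∑ ω : Fin d → Fin t → Bool, ∑ i, ∑ l,
          (S * T - S * signMatrix d t ω * (signMatrix d t ω)ᵀ * T) i l ^ 2 := by
        rw [hint]
        congr 1
        exact Finset.sum_congr rfl fun ω _ => hfr _ _ _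
    _ = N⁻¹ * ∑ i, ∑ l, ∑ ω : Fin d → Fin t → Bool,
          (S * T - S * signMatrix d t ω * (signMatrix d t ω)ᵀ * T) i l ^ 2 := by
        rw [Finset.sum_comm]
        congr 1
        exact Finset.sum_congr rfl fun i _ => Finset.sum_comm
    _ = ∑ i, ∑ l, (1 / (t : ℝ)) * ∑ p ∈ Finset.univ.offDiag,
          ((S i p.1 * T p.2 l) * (S i p.1 * T p.2 l)
            + (S i p.1 * T p.2 l) * (S i p.swap.1 * T p.swap.2 l)) := by
        rw [Finset.mul_sum]
        refine Finset.sum_congr rfl fun i _ => ?_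
        rw [Finset.mul_sum]
        refine Finset.sum_congr rfl fun l _ => ?_
        rw [hDsq i l]
        field_simp
    _ ≤ ∑ i, ∑ l, (1 / (t : ℝ)) * (2 * (∑ a, S i a ^ 2) * (∑ b, T b l ^ 2)) := by
        refine Finset.sum_le_sum fun i _ => Finset.sum_le_sum fun l _ => ?_
        refine mul_le_mul_of_nonneg_left ?_ (by positivity)
        exact St7.bound (fun a => S i a) (fun b => T b l)
    _ = 2 / (t : ℝ) * frobNorm S ^ 2 * frobNorm T ^ 2 := by
        have e2 : (∑ i : Fin d, ∑ j : Fin k, T i j ^ 2)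
            = ∑ l : Fin k, ∑ b : Fin d, T b l ^ 2 := Finset.sum_comm
        have e1 : 2 / (t : ℝ) * (∑ i, ∑ j, S i j ^ 2) * (∑ l : Fin k, ∑ b : Fin d, T b l ^ 2)
            = ∑ i, ∑ l, (1 / (t : ℝ)) * (2 * (∑ a, S i a ^ 2) * (∑ b, T b l ^ 2)) := by
          rw [mul_assoc, Finset.sum_mul_sum, Finset.mul_sum]
          refine Finset.sum_congr rfl fun i _ => ?_
          rw [Finset.mul_sum]
          exact Finset.sum_congr rfl fun l _ => by ring
        rw [hfr _ _ S, hfr _ _ T, e2, e1]
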